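/- Singularity related to Minkowski's question-mark function (Example 2.2 (iii)): Let X = [0,1], m = 2, f_0(x) = x/(x+1) and f_1(x) = 1/(2−x). Then f_0 and f_1 are weak contractions on [0,1], the unique continuous solution G of de Rham's equation (the inverse of Minkowski's question-mark function) is continuous and strictly increasing with G(0) = 0 and G(1) = 1, the quantity α = ∫₀¹ log_2(2 + G(t) − G(t)²) dt satisfies α > 1, and G′(t) = 0 for Lebesgue-a.e. t ∈ (0,1); in particular G is a singular function. -/

import Mathlib

open MeasureTheory Filter Set Topology

private lemma f0_le {u v : ℝ} (hu : 0 ≤ u) (huv : u ≤ v) : u / (u + 1) ≤ v / (v + 1) := by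
  rw [div_le_div_iff₀ (by linarith) (by linarith)]; nlinarith

private lemma f0_lt {u v : ℝ} (hu : 0 ≤ u) (huv : u < v) : u / (u + 1) < v / (v + 1) := by
  rw [div_lt_div_iff₀ (by linarith) (by linarith)]; nlinarith

private lemma f1_le {u v : ℝ} (huv : u ≤ v) (hv : v ≤ 1) : 1 / (2 - u) ≤ 1 / (2 - v) := by
  rw [div_le_div_iff₀ (by linarith) (by linarith)]; linarith

private lemma f1_lt {u v : ℝ} (huv : u < v) (hv : v ≤ 1) : 1 / (2 - u) < 1 / (2 - v) := by
  rw [div_lt_div_iff₀ (by linarith) (by linarith)]; linarith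

/-- dyadic sandwich lemma -/
private lemma sandwich (G : ℝ → ℝ)
    (hGX : Set.MapsTo G (Set.Icc 0 1) (Set.Icc 0 1))
    (hGeq0 : ∀ t : ℝ, 0 ≤ t → t ≤ 1 / 2 → G t = G (2 * t) / (G (2 * t) + 1))
    (hGeq1 : ∀ t : ℝ, 1 / 2 ≤ t → t ≤ 1 → G t = 1 / (2 - G (2 * t - 1)))
    (hG0 : G 0 = 0) (hG1 : G 1 = 1) :
    ∀ n k : ℕ, k < 2 ^ n →
      G ((k : ℝ) / 2 ^ n) < G (((k : ℝ) + 1) / 2 ^ n) ∧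
      ∀ t : ℝ, (k : ℝ) / 2 ^ n ≤ t → t ≤ ((k : ℝ) + 1) / 2 ^ n →
        G ((k : ℝ) / 2 ^ n) ≤ G t ∧ G t ≤ G (((k : ℝ) + 1) / 2 ^ n) := by
  intro n
  induction n with
  | zero =>
    intro k hk
    interval_cases k
    norm_num [hG0, hG1]
    intro t ht0 ht1
    have := hGX (mem_Icc.2 ⟨ht0, ht1⟩)
    rw [mem_Icc] at this
    exact ⟨this.1, this.2⟩
  | succ n ih =>
    intro k hk
    have h2n : (0:ℝ) < 2 ^ n := by positivity
    have h2n1 : (0:ℝ) < 2 ^ (n+1) := by positivity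
    have hpow : (2:ℝ) ^ (n+1) = 2 * 2 ^ n := by ring
    by_cases hk2 : k < 2 ^ n
    · -- left half
      have hkle : (k : ℝ) + 1 ≤ 2 ^ n := by exact_mod_cast Nat.succ_le_of_lt hk2
      have hk0 : (0:ℝ) ≤ (k:ℝ) := Nat.cast_nonneg k
      -- membership fact for points of the little interval
      have hmem : ∀ t : ℝ, (k : ℝ) / 2 ^ (n+1) ≤ t → t ≤ ((k : ℝ) + 1) / 2 ^ (n+1) →
          G t = G (2*t) / (G (2*t) + 1) ∧ (k:ℝ)/2^n ≤ 2*t ∧ 2*t ≤ ((k:ℝ)+1)/2^n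
            ∧ 0 ≤ G (2*t) := by
        intro t ht0 ht1
        have h1 : (0:ℝ) ≤ t := le_trans (by positivity) ht0
        have h2 : t ≤ 1/2 := by
          refine le_trans ht1 ?_
          rw [div_le_div_iff₀ h2n1 (by norm_num), hpow]
          nlinarith
        have h3 : (k:ℝ)/2^n ≤ 2*t := by
          rw [div_le_iff₀ h2n]
          rw [div_le_iff₀ h2n1, hpow] at ht0
          linarith
        have h4 : 2*t ≤ ((k:ℝ)+1)/2^n := by
          rw [le_div_iff₀ h2n]
          rw [le_div_iff₀ h2n1, hpow] at ht1
          linarith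
        have h5 : (0:ℝ) ≤ 2*t := by linarith
        have h6 : 2*t ≤ 1 := by
          calc 2*t ≤ ((k:ℝ)+1)/2^n := h4
          _ ≤ 1 := by rw [div_le_one h2n]; exact hkle
        have := hGX (mem_Icc.2 ⟨h5, h6⟩)
        rw [mem_Icc] at this
        exact ⟨hGeq0 t h1 h2, h3, h4, this.1⟩
      -- endpoints
      have hepL : G ((k:ℝ)/2^(n+1)) = G ((k:ℝ)/2^n) / (G ((k:ℝ)/2^n) + 1) := by
        have h := (hmem ((k:ℝ)/2^(n+1)) le_rfl (by
          exact (div_le_div_iff_of_pos_right h2n1).2 (by linarith))).1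
        rw [show 2*((k:ℝ)/2^(n+1)) = (k:ℝ)/2^n by rw [hpow]; ring] at h
        exact h
      have hepR : G (((k:ℝ)+1)/2^(n+1)) = G (((k:ℝ)+1)/2^n) / (G (((k:ℝ)+1)/2^n) + 1) := by
        have h := (hmem (((k:ℝ)+1)/2^(n+1)) (by
          exact (div_le_div_iff_of_pos_right h2n1).2 (by linarith)) le_rfl).1
        rw [show 2*(((k:ℝ)+1)/2^(n+1)) = ((k:ℝ)+1)/2^n by rw [hpow]; ring] at h
        exact h
      obtain ⟨ihlt, ihle⟩ := ih k hk2
      have hGk0 : 0 ≤ G ((k:ℝ)/2^n) := by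
        have hm : (k:ℝ)/2^n ∈ Set.Icc (0:ℝ) 1 :=
          ⟨by positivity, by rw [div_le_one h2n]; linarith⟩
        exact (hGX hm).1
      constructor
      · rw [hepL, hepR]; exact f0_lt hGk0 ihlt
      · intro t ht0 ht1
        obtain ⟨heq, h3, h4, hpos⟩ := hmem t ht0 ht1
        obtain ⟨hl, hr⟩ := ihle (2*t) h3 h4
        rw [heq, hepL, hepR]
        exact ⟨f0_le hGk0 hl, f0_le (le_trans hGk0 hl) hr⟩
    · -- right half
      push_neg at hk2
      obtain ⟨j, rfl⟩ : ∃ j, k = 2^n + j := ⟨k - 2^n, by omega⟩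
      have hj : j < 2^n := by
        have : 2^n + j < 2^(n+1) := hk
        simpa [pow_succ] using by omega
      have hjle : (j : ℝ) + 1 ≤ 2 ^ n := by exact_mod_cast Nat.succ_le_of_lt hj
      have hj0 : (0:ℝ) ≤ (j:ℝ) := Nat.cast_nonneg j
      have hcast : ((2^n + j : ℕ) : ℝ) = 2^n + (j:ℝ) := by push_cast; ring
      rw [hcast]
      have hmem : ∀ t : ℝ, ((2:ℝ)^n + j) / 2 ^ (n+1) ≤ t → t ≤ ((2:ℝ)^n + j + 1) / 2 ^ (n+1) →
          G t = 1 / (2 - G (2*t-1)) ∧ (j:ℝ)/2^n ≤ 2*t-1 ∧ 2*t-1 ≤ ((j:ℝ)+1)/2^n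
            ∧ G (2*t-1) ≤ 1 := by
        intro t ht0 ht1
        have h1 : 1/2 ≤ t := by
          refine le_trans ?_ ht0
          rw [div_le_div_iff₀ (by norm_num) h2n1, hpow]
          nlinarith
        have h2 : t ≤ 1 := by
          refine le_trans ht1 ?_
          rw [div_le_one h2n1, hpow]
          linarith
        have h3 : (j:ℝ)/2^n ≤ 2*t-1 := by
          rw [div_le_iff₀ h2n]
          rw [div_le_iff₀ h2n1, hpow] at ht0
          nlinarith
        have h4 : 2*t-1 ≤ ((j:ℝ)+1)/2^n := by
          rw [le_div_iff₀ h2n]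
          rw [le_div_iff₀ h2n1, hpow] at ht1
          nlinarith
        have h5 : (0:ℝ) ≤ 2*t-1 := by linarith
        have h6 : 2*t-1 ≤ 1 := by
          calc 2*t-1 ≤ ((j:ℝ)+1)/2^n := h4
          _ ≤ 1 := by rw [div_le_one h2n]; exact hjle
        have := hGX (mem_Icc.2 ⟨h5, h6⟩)
        rw [mem_Icc] at this
        exact ⟨hGeq1 t h1 h2, h3, h4, this.2⟩
      have hepL : G (((2:ℝ)^n + j)/2^(n+1)) = 1 / (2 - G ((j:ℝ)/2^n)) := by
        have h := (hmem (((2:ℝ)^n + j)/2^(n+1)) le_rfl (by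
          exact (div_le_div_iff_of_pos_right h2n1).2 (by linarith))).1
        rw [show 2*(((2:ℝ)^n + j)/2^(n+1)) - 1 = (j:ℝ)/2^n by
          rw [hpow]; field_simp; ring] at h
        exact h
      have hepR : G (((2:ℝ)^n + j + 1)/2^(n+1)) = 1 / (2 - G (((j:ℝ)+1)/2^n)) := by
        have h := (hmem (((2:ℝ)^n + j + 1)/2^(n+1)) (by
          exact (div_le_div_iff_of_pos_right h2n1).2 (by linarith)) le_rfl).1
        rw [show 2*(((2:ℝ)^n + j + 1)/2^(n+1)) - 1 = ((j:ℝ)+1)/2^n by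
          rw [hpow]; field_simp; ring] at h
        exact h
      obtain ⟨ihlt, ihle⟩ := ih j hj
      have hGj1 : G (((j:ℝ)+1)/2^n) ≤ 1 := by
        have hm : ((j:ℝ)+1)/2^n ∈ Set.Icc (0:ℝ) 1 :=
          ⟨by positivity, by rw [div_le_one h2n]; linarith⟩
        exact (hGX hm).2
      constructor
      · rw [hepL, hepR]; exact f1_lt ihlt hGj1
      · intro t ht0 ht1
        obtain ⟨heq, h3, h4, hbd⟩ := hmem t ht0 ht1
        obtain ⟨hl, hr⟩ := ihle (2*t-1) h3 h4
        rw [heq, hepL, hepR]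
        exact ⟨f1_le hl (le_trans hr hGj1), f1_le hr hGj1⟩

private lemma dyadic_chain (G : ℝ → ℝ)
    (hGX : Set.MapsTo G (Set.Icc 0 1) (Set.Icc 0 1))
    (hGeq0 : ∀ t : ℝ, 0 ≤ t → t ≤ 1 / 2 → G t = G (2 * t) / (G (2 * t) + 1))
    (hGeq1 : ∀ t : ℝ, 1 / 2 ≤ t → t ≤ 1 → G t = 1 / (2 - G (2 * t - 1)))
    (hG0 : G 0 = 0) (hG1 : G 1 = 1) :
    ∀ n j k : ℕ, j < k → k ≤ 2 ^ n → G ((j : ℝ) / 2 ^ n) < G ((k : ℝ) / 2 ^ n) := by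
  intro n j k
  induction k with
  | zero => omega
  | succ k ihk =>
    intro hjk hk2
    have hstep : G ((k : ℝ) / 2 ^ n) < G (((k : ℝ) + 1) / 2 ^ n) :=
      (sandwich G hGX hGeq0 hGeq1 hG0 hG1 n k (by omega)).1
    have hcast : ((k + 1 : ℕ) : ℝ) = (k : ℝ) + 1 := by push_cast; ring
    rw [hcast]
    rcases Nat.lt_or_ge j k with h | h
    · exact lt_trans (ihk h (by omega)) hstep
    · have : j = k := by omega
      rw [this]; exact hstep

set_option maxHeartbeats 1000000 in
private lemma G_strictMono (G : ℝ → ℝ)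
    (hGX : Set.MapsTo G (Set.Icc 0 1) (Set.Icc 0 1))
    (hGeq0 : ∀ t : ℝ, 0 ≤ t → t ≤ 1 / 2 → G t = G (2 * t) / (G (2 * t) + 1))
    (hGeq1 : ∀ t : ℝ, 1 / 2 ≤ t → t ≤ 1 → G t = 1 / (2 - G (2 * t - 1)))
    (hG0 : G 0 = 0) (hG1 : G 1 = 1) :
    StrictMonoOn G (Set.Icc (0 : ℝ) 1) := by
  intro x hx y hy hxy
  rw [Set.mem_Icc] at hx hy
  obtain ⟨m, hm⟩ := pow_unbounded_of_one_lt (3 / (y - x)) (by norm_num : (1:ℝ) < 2)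
  set n := m with hn
  have h2n : (0:ℝ) < 2 ^ n := by positivity
  have h3 : 3 < 2 ^ n * (y - x) := by
    rw [div_lt_iff₀ (by linarith)] at hm
    linarith [hm]
  -- k = floor of x * 2^n
  have hx2n : (0:ℝ) ≤ x * 2 ^ n := mul_nonneg hx.1 (le_of_lt h2n)
  set K : ℤ := ⌊x * 2 ^ n⌋ with hK
  have hK0 : 0 ≤ K := Int.floor_nonneg.2 hx2n
  set k : ℕ := K.toNat with hk
  have hkK : (k : ℝ) = (K : ℝ) := by
    exact_mod_cast congrArg (fun z : ℤ => (z : ℝ)) (Int.toNat_of_nonneg hK0)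
  have hkle : (k : ℝ) ≤ x * 2 ^ n := by rw [hkK]; exact Int.floor_le _
  have hklt : x * 2 ^ n < (k : ℝ) + 1 := by rw [hkK]; exact Int.lt_floor_add_one _
  have hxlt1 : x < 1 := lt_of_lt_of_le hxy hy.2
  have hkn : k < 2 ^ n := by
    have h1 : (k : ℝ) < 2 ^ n := by nlinarith
    exact_mod_cast h1
  -- K' = floor of y * 2^n
  set K' : ℤ := ⌊y * 2 ^ n⌋ with hK'
  have hK'0 : 0 ≤ K' := Int.floor_nonneg.2 (by nlinarith)
  set k' : ℕ := K'.toNat with hk'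
  have hk'K : (k' : ℝ) = (K' : ℝ) := by
    exact_mod_cast congrArg (fun z : ℤ => (z : ℝ)) (Int.toNat_of_nonneg hK'0)
  have hk'le : (k' : ℝ) ≤ y * 2 ^ n := by rw [hk'K]; exact Int.floor_le _
  have hk'lt : y * 2 ^ n < (k' : ℝ) + 1 := by rw [hk'K]; exact Int.lt_floor_add_one _
  have hk'2n : k' ≤ 2 ^ n := by
    have h1 : (k' : ℝ) ≤ 2 ^ n := by nlinarith [hy.2]
    exact_mod_cast h1
  -- strict gap : k + 1 < k'
  have hgap : k + 1 < k' := by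
    have : ((k:ℝ) + 1) + 1 < (k' : ℝ) + 1 := by nlinarith
    have h2 : (k:ℝ) + 1 < (k' : ℝ) := by linarith
    exact_mod_cast h2
  -- G x ≤ G ((k+1)/2^n)
  have hxups : G x ≤ G (((k:ℝ) + 1) / 2 ^ n) := by
    refine ((sandwich G hGX hGeq0 hGeq1 hG0 hG1 n k hkn).2 x ?_ ?_).2
    · rw [div_le_iff₀ h2n]; nlinarith
    · rw [le_div_iff₀ h2n]; nlinarith
  -- G (k'/2^n) ≤ G y
  have hydown : G ((k':ℝ) / 2 ^ n) ≤ G y := by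
    rcases eq_or_lt_of_le hk'2n with heq | hlt
    · have hk'eq : (k':ℝ) = 2 ^ n := by rw [heq]; push_cast; ring
      have hy1 : y = 1 := le_antisymm hy.2 (by nlinarith [hk'le, hk'eq])
      have heq1 : (k':ℝ) / 2^n = 1 := by rw [hk'eq]; field_simp
      rw [heq1, hy1]
    · refine ((sandwich G hGX hGeq0 hGeq1 hG0 hG1 n k' hlt).2 y ?_ ?_).1
      · rw [div_le_iff₀ h2n]; nlinarith
      · rw [le_div_iff₀ h2n]; nlinarith
  calc G x ≤ G (((k:ℝ) + 1) / 2 ^ n) := hxups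
    _ = G (((k+1 : ℕ) : ℝ) / 2 ^ n) := by norm_cast
    _ < G ((k' : ℝ) / 2 ^ n) := dyadic_chain G hGX hGeq0 hGeq1 hG0 hG1 n (k+1) k' hgap hk'2n
    _ ≤ G y := hydown

/-- binary digit of `t` at level `n` -/
private noncomputable def drDig (t : ℝ) (n : ℕ) : ℤ := ⌊t * 2 ^ (n + 1)⌋ - 2 * ⌊t * 2 ^ n⌋

/-- Möbius matrix describing `G` on the dyadic interval of level `n` containing `t` -/
private noncomputable def drMat (t : ℝ) : ℕ → ℝ × ℝ × ℝ × ℝ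
  | 0 => (1, 0, 0, 1)
  | n + 1 =>
    if drDig t n = 0 then
      ((drMat t n).1 + (drMat t n).2.1, (drMat t n).2.1,
        (drMat t n).2.2.1 + (drMat t n).2.2.2, (drMat t n).2.2.2)
    else
      (-(drMat t n).2.1, (drMat t n).1 + 2 * (drMat t n).2.1,
        -(drMat t n).2.2.2, (drMat t n).2.2.1 + 2 * (drMat t n).2.2.2)

private lemma drDig_mem (t : ℝ) (n : ℕ) : drDig t n = 0 ∨ drDig t n = 1 := by
  unfold drDig
  set u := t * 2 ^ n with hu
  have h2 : t * 2 ^ (n + 1) = 2 * u := by rw [hu]; ring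
  rw [h2]
  have h3 : (2:ℤ) * ⌊u⌋ ≤ ⌊2 * u⌋ := by
    apply Int.le_floor.2
    push_cast
    nlinarith [Int.floor_le u]
  have h4 : ⌊2 * u⌋ < 2 * ⌊u⌋ + 2 := by
    apply Int.floor_lt.2
    push_cast
    nlinarith [Int.lt_floor_add_one u]
  omega

private lemma drMat_pos (t : ℝ) : ∀ n : ℕ,
    (drMat t n).1 * (drMat t n).2.2.2 - (drMat t n).2.1 * (drMat t n).2.2.1 = 1 ∧
    0 < (drMat t n).2.2.2 ∧ 0 < (drMat t n).2.2.1 + (drMat t n).2.2.2 := by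
  intro n
  induction n with
  | zero => norm_num [drMat]
  | succ n ih =>
    obtain ⟨hdet, hd, hcd⟩ := ih
    rcases drDig_mem t n with h | h
    · simp only [drMat, h, reduceIte]
      exact ⟨by linear_combination hdet, hd, by linarith⟩
    · have h0 : ¬ (drDig t n = 0) := by omega
      simp only [drMat, h0, reduceIte]
      exact ⟨by linear_combination hdet, by linarith, by linarith⟩

private lemma moeb0 {a b c d x : ℝ} (hx : 0 ≤ x) (hx1 : x ≤ 1) (hd : 0 < d) (hcd : 0 < c + d) :
    (a * (x / (x + 1)) + b) / (c * (x / (x + 1)) + d) = ((a + b) * x + b) / ((c + d) * x + d) := by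
  have h1 : x + 1 ≠ 0 := by linarith
  have h2 : (0:ℝ) < (c + d) * x + d := by nlinarith
  have h3 : c * (x / (x + 1)) + d = ((c + d) * x + d) / (x + 1) := by field_simp; ring
  have h4 : a * (x / (x + 1)) + b = ((a + b) * x + b) / (x + 1) := by field_simp; ring
  rw [h3, h4, div_div_div_cancel_right₀ h1]

private lemma moeb1 {a b c d x : ℝ} (hx : 0 ≤ x) (hx1 : x ≤ 1) (hd : 0 < d) (hcd : 0 < c + d) :
    (a * (1 / (2 - x)) + b) / (c * (1 / (2 - x)) + d) =
      ((-b) * x + (a + 2 * b)) / ((-d) * x + (c + 2 * d)) := by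
  have h1 : (2:ℝ) - x ≠ 0 := by linarith
  have h2 : (0:ℝ) < (-d) * x + (c + 2 * d) := by nlinarith
  have h3 : c * (1 / (2 - x)) + d = ((-d) * x + (c + 2 * d)) / (2 - x) := by field_simp; ring
  have h4 : a * (1 / (2 - x)) + b = ((-b) * x + (a + 2 * b)) / (2 - x) := by field_simp; ring
  rw [h3, h4, div_div_div_cancel_right₀ h1]

private lemma drMat_G (G : ℝ → ℝ)
    (hGX : Set.MapsTo G (Set.Icc 0 1) (Set.Icc 0 1))
    (hGeq0 : ∀ t : ℝ, 0 ≤ t → t ≤ 1 / 2 → G t = G (2 * t) / (G (2 * t) + 1))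
    (hGeq1 : ∀ t : ℝ, 1 / 2 ≤ t → t ≤ 1 → G t = 1 / (2 - G (2 * t - 1)))
    {t : ℝ} (ht : t ∈ Set.Ico (0:ℝ) 1) :
    ∀ n : ℕ, ∀ s : ℝ, 0 ≤ s → s ≤ 1 →
      G ((⌊t * 2 ^ n⌋ : ℝ) / 2 ^ n + s / 2 ^ n) =
        ((drMat t n).1 * G s + (drMat t n).2.1) /
          ((drMat t n).2.2.1 * G s + (drMat t n).2.2.2) := by
  intro n
  induction n with
  | zero =>
    intro s hs0 hs1
    have h1 : ⌊t * 2 ^ 0⌋ = 0 := by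
      rw [pow_zero, mul_one]
      exact Int.floor_eq_zero_iff.2 (Set.mem_Ico.2 ⟨ht.1, ht.2⟩)
    rw [h1]
    norm_num [drMat]
  | succ n ih =>
    intro s hs0 hs1
    have h2n : (0:ℝ) < 2 ^ n := by positivity
    obtain ⟨hdet, hd, hcd⟩ := drMat_pos t n
    have hGs := hGX (Set.mem_Icc.2 ⟨hs0, hs1⟩)
    rcases drDig_mem t n with h | h
    · have hfl : (⌊t * 2 ^ (n+1)⌋ : ℝ) = 2 * (⌊t * 2 ^ n⌋ : ℝ) := by
        have h2 : ⌊t * 2 ^ (n+1)⌋ = 2 * ⌊t * 2 ^ n⌋ := by unfold drDig at h; omega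
        exact_mod_cast h2
      have harg : (⌊t * 2 ^ (n+1)⌋ : ℝ) / 2 ^ (n+1) + s / 2 ^ (n+1)
          = (⌊t * 2 ^ n⌋ : ℝ) / 2 ^ n + (s/2) / 2 ^ n := by
        rw [hfl]; field_simp; ring
      have hhalf : G (s/2) = G s / (G s + 1) := by
        have h3 := hGeq0 (s/2) (by linarith) (by linarith)
        rwa [show 2 * (s/2) = s by ring] at h3
      rw [harg, ih (s/2) (by linarith) (by linarith), hhalf,
        moeb0 hGs.1 hGs.2 hd hcd]
      simp only [drMat, h, reduceIte]
    · have h0 : ¬ (drDig t n = 0) := by omega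
      have hfl : (⌊t * 2 ^ (n+1)⌋ : ℝ) = 2 * (⌊t * 2 ^ n⌋ : ℝ) + 1 := by
        have h2 : ⌊t * 2 ^ (n+1)⌋ = 2 * ⌊t * 2 ^ n⌋ + 1 := by unfold drDig at h; omega
        exact_mod_cast h2
      have harg : (⌊t * 2 ^ (n+1)⌋ : ℝ) / 2 ^ (n+1) + s / 2 ^ (n+1)
          = (⌊t * 2 ^ n⌋ : ℝ) / 2 ^ n + ((1+s)/2) / 2 ^ n := by
        rw [hfl]; field_simp; ring
      have hhalf : G ((1+s)/2) = 1 / (2 - G s) := by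
        have h3 := hGeq1 ((1+s)/2) (by linarith) (by linarith)
        rwa [show 2 * ((1+s)/2) - 1 = s by ring] at h3
      rw [harg, ih ((1+s)/2) (by linarith) (by linarith), hhalf,
        moeb1 hGs.1 hGs.2 hd hcd]
      simp only [drMat, h0, reduceIte]

set_option maxHeartbeats 1000000 in
private lemma deriv_eq_zero (G : ℝ → ℝ)
    (hGX : Set.MapsTo G (Set.Icc 0 1) (Set.Icc 0 1))
    (hGeq0 : ∀ t : ℝ, 0 ≤ t → t ≤ 1 / 2 → G t = G (2 * t) / (G (2 * t) + 1))
    (hGeq1 : ∀ t : ℝ, 1 / 2 ≤ t → t ≤ 1 → G t = 1 / (2 - G (2 * t - 1)))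
    (hG0 : G 0 = 0) (hG1 : G 1 = 1)
    {t : ℝ} (ht : t ∈ Set.Ioo (0:ℝ) 1) {c : ℝ} (hc : HasDerivAt G c t) : c = 0 := by
  have htI : t ∈ Set.Ico (0:ℝ) 1 := ⟨le_of_lt ht.1, ht.2⟩
  set p : ℕ → ℝ := fun n => (drMat t n).2.2.1 + (drMat t n).2.2.2 with hp
  set q : ℕ → ℝ := fun n => (drMat t n).2.2.2 with hq
  have hppos : ∀ n, 0 < p n := fun n => (drMat_pos t n).2.2
  have hqpos : ∀ n, 0 < q n := fun n => (drMat_pos t n).2.1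
  set L : ℕ → ℝ := fun n =>
    G ((⌊t * 2 ^ n⌋ : ℝ) / 2 ^ n + 1 / 2 ^ n) - G ((⌊t * 2 ^ n⌋ : ℝ) / 2 ^ n) with hL
  have hLval : ∀ n, L n = 1 / (p n * q n) := by
    intro n
    obtain ⟨hdet, hd, hcd⟩ := drMat_pos t n
    have e1 := drMat_G G hGX hGeq0 hGeq1 htI n 1 zero_le_one le_rfl
    have e0 := drMat_G G hGX hGeq0 hGeq1 htI n 0 le_rfl zero_le_one
    have e0' : G ((⌊t * 2 ^ n⌋ : ℝ) / 2 ^ n) = ((drMat t n).1 * G 0 + (drMat t n).2.1) /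
        ((drMat t n).2.2.1 * G 0 + (drMat t n).2.2.2) := by
      rw [← e0]; norm_num
    simp only [hL, hp, hq]
    rw [e1, e0', hG1, hG0]
    rw [mul_one, mul_one, mul_zero, mul_zero, zero_add, zero_add,
      div_sub_div _ _ (by linarith : (drMat t n).2.2.1 + (drMat t n).2.2.2 ≠ 0)
        (ne_of_gt hd)]
    rw [show ((drMat t n).1 + (drMat t n).2.1) * (drMat t n).2.2.2 -
        ((drMat t n).2.2.1 + (drMat t n).2.2.2) * (drMat t n).2.1 = 1 by
      linear_combination hdet]
  have hLpos : ∀ n, 0 < L n := by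
    intro n
    rw [hLval n]
    exact div_pos one_pos (mul_pos (hppos n) (hqpos n))
  have hstep : ∀ n, (p (n+1) = p n + q n ∧ q (n+1) = q n) ∨
      (p (n+1) = p n ∧ q (n+1) = p n + q n) := by
    intro n
    rcases drDig_mem t n with h | h
    · left
      constructor <;> simp only [hp, hq, drMat, h, reduceIte] <;> ring
    · right
      have h0 : ¬ (drDig t n = 0) := by omega
      constructor <;> simp only [hp, hq, drMat, h0, reduceIte] <;> ring
  -- derivative bound
  have hbound : ∀ ε : ℝ, 0 < ε → ∃ N : ℕ, ∀ n ≥ N, |L n * 2 ^ n - c| ≤ 2 * ε := by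
    intro ε hε
    have h1 := hasDerivAt_iff_isLittleO.mp hc
    have h2 := Asymptotics.isLittleO_iff.mp h1 hε
    rw [Metric.eventually_nhds_iff] at h2
    obtain ⟨δ, hδ, hball⟩ := h2
    obtain ⟨N, hN⟩ := exists_pow_lt_of_lt_one hδ (by norm_num : (1:ℝ)/2 < 1)
    refine ⟨N, fun n hn => ?_⟩
    have h2n : (0:ℝ) < 2^n := by positivity
    have hlt : (1:ℝ)/2^n < δ := by
      calc (1:ℝ)/2^n = (1/2)^n := by rw [div_pow]; norm_num
      _ ≤ (1/2)^N := pow_le_pow_of_le_one (by norm_num) (by norm_num) hn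
      _ < δ := hN
    have ha1 : (⌊t * 2 ^ n⌋ : ℝ) / 2 ^ n ≤ t := by
      rw [div_le_iff₀ h2n]; exact Int.floor_le _
    have ha2 : t < (⌊t * 2 ^ n⌋ : ℝ) / 2 ^ n + 1 / 2 ^ n := by
      rw [show (⌊t * 2 ^ n⌋ : ℝ) / 2 ^ n + 1 / 2 ^ n = ((⌊t * 2 ^ n⌋ : ℝ) + 1) / 2 ^ n by ring,
        lt_div_iff₀ h2n]
      exact Int.lt_floor_add_one _
    have hda : dist ((⌊t * 2 ^ n⌋ : ℝ) / 2 ^ n) t < δ := by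
      rw [Real.dist_eq, abs_of_nonpos (by linarith)]
      linarith
    have hdb : dist ((⌊t * 2 ^ n⌋ : ℝ) / 2 ^ n + 1 / 2 ^ n) t < δ := by
      rw [Real.dist_eq, abs_of_nonneg (by linarith)]
      linarith
    have hb1 := hball hda
    have hb2 := hball hdb
    rw [Real.norm_eq_abs, Real.norm_eq_abs, smul_eq_mul] at hb1 hb2
    have habs1 : |G ((⌊t * 2 ^ n⌋ : ℝ) / 2 ^ n) - G t -
        ((⌊t * 2 ^ n⌋ : ℝ) / 2 ^ n - t) * c| ≤ ε * (1/2^n) := by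
      refine le_trans hb1 ?_
      have : |(⌊t * 2 ^ n⌋ : ℝ) / 2 ^ n - t| ≤ 1/2^n := by
        rw [abs_of_nonpos (by linarith)]; linarith
      nlinarith [abs_nonneg ((⌊t * 2 ^ n⌋ : ℝ) / 2 ^ n - t)]
    have habs2 : |G ((⌊t * 2 ^ n⌋ : ℝ) / 2 ^ n + 1 / 2 ^ n) - G t -
        ((⌊t * 2 ^ n⌋ : ℝ) / 2 ^ n + 1 / 2 ^ n - t) * c| ≤ ε * (1/2^n) := by
      refine le_trans hb2 ?_
      have : |(⌊t * 2 ^ n⌋ : ℝ) / 2 ^ n + 1 / 2 ^ n - t| ≤ 1/2^n := by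
        rw [abs_of_nonneg (by linarith)]; linarith
      nlinarith [abs_nonneg ((⌊t * 2 ^ n⌋ : ℝ) / 2 ^ n + 1 / 2 ^ n - t)]
    have e : L n - (1/2^n) * c =
        (G ((⌊t * 2 ^ n⌋ : ℝ) / 2 ^ n + 1 / 2 ^ n) - G t -
          ((⌊t * 2 ^ n⌋ : ℝ) / 2 ^ n + 1 / 2 ^ n - t) * c) -
        (G ((⌊t * 2 ^ n⌋ : ℝ) / 2 ^ n) - G t -
          ((⌊t * 2 ^ n⌋ : ℝ) / 2 ^ n - t) * c) := by
      simp only [hL]; ring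
    have h6 : |L n - (1/2^n) * c| ≤ 2 * ε * (1/2^n) := by
      rw [e]
      exact le_trans (abs_sub _ _) (by linarith)
    calc |L n * 2^n - c| = |L n - (1/2^n) * c| * 2^n := by
          rw [show L n * 2^n - c = (L n - (1/2^n) * c) * 2^n by field_simp, abs_mul,
            abs_of_pos h2n]
      _ ≤ 2 * ε * (1/2^n) * 2^n := by
          exact mul_le_mul_of_nonneg_right h6 (le_of_lt h2n)
      _ = 2 * ε := by field_simp
  clear_value p q L
  -- conclude
  by_contra hne
  have hc0 : 0 ≤ c := by
    by_contra hneg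
    push_neg at hneg
    obtain ⟨N, hN⟩ := hbound (-c/4) (by linarith)
    obtain ⟨hB1, hB2⟩ := abs_le.mp (hN N le_rfl)
    have h2N : (0:ℝ) < 2^N := by positivity
    nlinarith [mul_pos (hLpos N) h2N]
  have hcpos : 0 < c := lt_of_le_of_ne hc0 (Ne.symm hne)
  obtain ⟨N, hN⟩ := hbound (c/100) (by linarith)
  have hr : ∀ n, N ≤ n → 5 * (p n + q n) < 12 * p n ∧ 12 * p n < 7 * (p n + q n) := by
    intro n hn
    have hA := abs_le.mp (hN n hn)
    have hA' := abs_le.mp (hN (n+1) (by omega))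
    have h2n : (0:ℝ) < 2^n := by positivity
    have h2n1 : (0:ℝ) < 2^(n+1) := by positivity
    have hpow : (2:ℝ)^(n+1) = 2 * 2^n := by ring
    have hP := hppos n; have hQ := hqpos n
    have hP' := hppos (n+1); have hQ' := hqpos (n+1)
    have f1 : 49*c/50 * (p n * q n) ≤ 2^n := by
      have h3 : 49*c/50 ≤ L n * 2^n := by linarith [hA.1]
      rw [hLval n, one_div, inv_mul_eq_div, le_div_iff₀ (mul_pos hP hQ)] at h3
      linarith
    have f2 : 2^n ≤ 51*c/50 * (p n * q n) := by
      have h3 : L n * 2^n ≤ 51*c/50 := by linarith [hA.2]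
      rw [hLval n, one_div, inv_mul_eq_div, div_le_iff₀ (mul_pos hP hQ)] at h3
      linarith
    have f3 : 49*c/50 * (p (n+1) * q (n+1)) ≤ 2^(n+1) := by
      have h3 : 49*c/50 ≤ L (n+1) * 2^(n+1) := by linarith [hA'.1]
      rw [hLval (n+1), one_div, inv_mul_eq_div, le_div_iff₀ (mul_pos hP' hQ')] at h3
      linarith
    have f4 : 2^(n+1) ≤ 51*c/50 * (p (n+1) * q (n+1)) := by
      have h3 : L (n+1) * 2^(n+1) ≤ 51*c/50 := by linarith [hA'.2]
      rw [hLval (n+1), one_div, inv_mul_eq_div, div_le_iff₀ (mul_pos hP' hQ')] at h3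
      linarith
    rw [hpow] at f3 f4
    rcases hstep n with ⟨hp1, hq1⟩ | ⟨hp1, hq1⟩ <;> rw [hp1, hq1] at f3 f4
    · have hcq : 0 < c * q n := mul_pos hcpos hQ
      constructor
      · have h6 : (49 * (p n + q n)) * (c * q n) ≤ (102 * p n) * (c * q n) := by
          nlinarith [f3, f2]
        have g : 49 * (p n + q n) ≤ 102 * p n := (mul_le_mul_iff_of_pos_right hcq).mp h6
        linarith [g, hP]
      · have h6 : (98 * p n) * (c * q n) ≤ (51 * (p n + q n)) * (c * q n) := by
          nlinarith [f4, f1]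
        have g : 98 * p n ≤ 51 * (p n + q n) := (mul_le_mul_iff_of_pos_right hcq).mp h6
        linarith [g, hP, hQ]
    · have hcp : 0 < c * p n := mul_pos hcpos hP
      constructor
      · have h6 : (98 * q n) * (c * p n) ≤ (51 * (p n + q n)) * (c * p n) := by
          nlinarith [f4, f1]
        have g : 98 * q n ≤ 51 * (p n + q n) := (mul_le_mul_iff_of_pos_right hcp).mp h6
        linarith [g, hP, hQ]
      · have h6 : (49 * (p n + q n)) * (c * p n) ≤ (102 * q n) * (c * p n) := by
          nlinarith [f3, f2]
        have g : 49 * (p n + q n) ≤ 102 * q n := (mul_le_mul_iff_of_pos_right hcp).mp h6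
        linarith [g, hP, hQ]
  obtain ⟨g1, g2⟩ := hr N le_rfl
  obtain ⟨g3, g4⟩ := hr (N+1) (by omega)
  rcases hstep N with ⟨hp1, hq1⟩ | ⟨hp1, hq1⟩ <;> rw [hp1, hq1] at g3 g4 <;>
    nlinarith [hppos N, hqpos N, g1, g2, g3, g4]

set_option maxHeartbeats 1000000 in
/-- **Example 2.2 (iii): singularity of the inverse of Minkowski's question-mark function.**
Let `f₀(x) = x/(x+1)` and `f₁(x) = 1/(2-x)` on `[0,1]`, and let `G` be the unique continuous
solution of de Rham's equation with `G(0) = 0`, `G(1) = 1` (the inverse of Minkowski's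
question-mark function). Then `f₀` and `f₁` are weak contractions on `[0,1]`, `G` is strictly
increasing, `α = ∫₀¹ log₂(2 + G(t) - G(t)²) dt > 1`, and `G'(t) = 0` for Lebesgue-a.e.
`t ∈ (0,1)`; in particular `G` is a singular function. -/
theorem minkowski_inverse_singular (G : ℝ → ℝ)
    (hGc : ContinuousOn G (Set.Icc 0 1))
    (hGX : Set.MapsTo G (Set.Icc 0 1) (Set.Icc 0 1))
    (hGeq0 : ∀ t : ℝ, 0 ≤ t → t ≤ 1 / 2 → G t = G (2 * t) / (G (2 * t) + 1))
    (hGeq1 : ∀ t : ℝ, 1 / 2 ≤ t → t ≤ 1 → G t = 1 / (2 - G (2 * t - 1)))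
    (hG0 : G 0 = 0) (hG1 : G 1 = 1) :
    (∀ x ∈ Set.Icc (0 : ℝ) 1, ∀ y ∈ Set.Icc (0 : ℝ) 1, x ≠ y →
      |x / (x + 1) - y / (y + 1)| < |x - y|) ∧
    (∀ x ∈ Set.Icc (0 : ℝ) 1, ∀ y ∈ Set.Icc (0 : ℝ) 1, x ≠ y →
      |1 / (2 - x) - 1 / (2 - y)| < |x - y|) ∧
    StrictMonoOn G (Set.Icc (0 : ℝ) 1) ∧
    1 < ∫ t in Set.Ico (0 : ℝ) 1, Real.logb 2 (2 + G t - (G t) ^ 2) ∧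
    ∀ᵐ t ∂(volume.restrict (Set.Ioo (0 : ℝ) 1)),
      HasDerivWithinAt G 0 (Set.Icc (0 : ℝ) 1) t := by
  have hsm : StrictMonoOn G (Set.Icc (0 : ℝ) 1) := G_strictMono G hGX hGeq0 hGeq1 hG0 hG1
  have hmono : MonotoneOn G (Set.Icc (0 : ℝ) 1) := hsm.monotoneOn
  refine ⟨?_, ?_, hsm, ?_, ?_⟩
  · -- f₀ weak contraction
    intro x hx y hy hxy
    rw [Set.mem_Icc] at hx hy
    have hx1 : x + 1 ≠ 0 := by linarith [hx.1]
    have hy1 : y + 1 ≠ 0 := by linarith [hy.1]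
    have key : x / (x + 1) - y / (y + 1) = (x - y) / ((x + 1) * (y + 1)) := by
      field_simp; ring
    have hprod : 1 < (x + 1) * (y + 1) := by
      have hxy0 : 0 < x + y := by
        rcases eq_or_lt_of_le hx.1 with h | h
        · rcases eq_or_lt_of_le hy.1 with h' | h'
          · exact absurd (h.symm.trans h') hxy
          · linarith
        · linarith [hy.1]
      nlinarith [hx.1, hy.1]
    rw [key, abs_div, abs_of_pos (by linarith : (0:ℝ) < (x + 1) * (y + 1))]
    exact div_lt_self (abs_pos.2 (sub_ne_zero.2 hxy)) hprod
  · -- f₁ weak contraction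
    intro x hx y hy hxy
    rw [Set.mem_Icc] at hx hy
    have hx1 : (2:ℝ) - x ≠ 0 := by linarith [hx.2]
    have hy1 : (2:ℝ) - y ≠ 0 := by linarith [hy.2]
    have key : 1 / (2 - x) - 1 / (2 - y) = (x - y) / ((2 - x) * (2 - y)) := by
      rw [div_sub_div _ _ hx1 hy1]; ring
    have hprod : 1 < (2 - x) * (2 - y) := by
      have hxy0 : 0 < (1 - x) + (1 - y) := by
        rcases eq_or_lt_of_le hx.2 with h | h
        · rcases eq_or_lt_of_le hy.2 with h' | h'
          · exact absurd (h.trans h'.symm) hxy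
          · linarith
        · linarith [hy.2]
      nlinarith [hx.2, hy.2]
    rw [key, abs_div, abs_of_pos (by nlinarith [hx.2, hy.2] : (0:ℝ) < (2 - x) * (2 - y))]
    exact div_lt_self (abs_pos.2 (sub_ne_zero.2 hxy)) hprod
  · -- integral > 1
    have Ghalf : G (1/2) = 1/2 := by
      have h := hGeq1 (1/2) le_rfl (by norm_num)
      rw [show 2 * (1/2 : ℝ) - 1 = 0 by norm_num, hG0] at h
      norm_num at h
      exact h
    have G14 : G (1/4) = 1/3 := by
      have h := hGeq0 (1/4) (by norm_num) (by norm_num)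
      rw [show 2 * (1/4 : ℝ) = 1/2 by norm_num, Ghalf] at h
      norm_num at h
      exact h
    have G34 : G (3/4) = 2/3 := by
      have h := hGeq1 (3/4) (by norm_num) (by norm_num)
      rw [show 2 * (3/4 : ℝ) - 1 = 1/2 by norm_num, Ghalf] at h
      norm_num at h
      exact h
    set H : ℝ → ℝ := fun t => Real.logb 2 (2 + G t - (G t) ^ 2) with hH
    have harg : ∀ x ∈ Set.Icc (0:ℝ) 1, 2 ≤ 2 + G x - (G x) ^ 2 := by
      intro x hx
      have h := hGX hx
      nlinarith [h.1, h.2]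
    have hH1 : ∀ x ∈ Set.Icc (0:ℝ) 1, 1 ≤ H x := by
      intro x hx
      have h2 := harg x hx
      calc (1:ℝ) = Real.logb 2 2 := (Real.logb_self_eq_one (by norm_num)).symm
        _ ≤ H x := Real.logb_le_logb_of_le (by norm_num) (by norm_num) h2
    have hHmid : ∀ x ∈ Set.Icc (1/4:ℝ) (3/4), Real.logb 2 (20/9) ≤ H x := by
      intro x hx
      rw [Set.mem_Icc] at hx
      have hxm : x ∈ Set.Icc (0:ℝ) 1 := ⟨by linarith [hx.1], by linarith [hx.2]⟩
      have hl : (1:ℝ)/3 ≤ G x := by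
        rw [← G14]
        exact hmono (by norm_num) hxm hx.1
      have hr : G x ≤ 2/3 := by
        rw [← G34]
        exact hmono hxm (by norm_num) hx.2
      have h2 : (20:ℝ)/9 ≤ 2 + G x - (G x) ^ 2 := by nlinarith
      exact Real.logb_le_logb_of_le (by norm_num) (by norm_num) h2
    have hcont : ContinuousOn H (Set.Icc 0 1) := by
      have h1 : ContinuousOn (fun t => 2 + G t - (G t) ^ 2) (Set.Icc (0:ℝ) 1) :=
        (continuousOn_const.add hGc).sub (hGc.pow 2)
      have h2 : ∀ x ∈ Set.Icc (0:ℝ) 1, 2 + G x - (G x) ^ 2 ≠ 0 := by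
        intro x hx
        have := harg x hx
        linarith
      simp only [hH, Real.logb]
      exact (h1.log h2).div_const _
    have hint : ∀ a b : ℝ, 0 ≤ a → a ≤ b → b ≤ 1 → IntervalIntegrable H volume a b := by
      intro a b ha hab hb
      apply ContinuousOn.intervalIntegrable_of_Icc hab
      exact hcont.mono (Set.Icc_subset_Icc ha hb)
    have hsplit1 : (∫ t in (0:ℝ)..(1/4:ℝ), H t) + (∫ t in (1/4:ℝ)..1, H t)
        = ∫ t in (0:ℝ)..1, H t :=
      intervalIntegral.integral_add_adjacent_intervals
        (hint 0 (1/4) le_rfl (by norm_num) (by norm_num))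
        (hint (1/4) 1 (by norm_num) (by norm_num) le_rfl)
    have hsplit2 : (∫ t in (1/4:ℝ)..(3/4:ℝ), H t) + (∫ t in (3/4:ℝ)..1, H t)
        = ∫ t in (1/4:ℝ)..1, H t :=
      intervalIntegral.integral_add_adjacent_intervals
        (hint (1/4) (3/4) (by norm_num) (by norm_num) (by norm_num))
        (hint (3/4) 1 (by norm_num) (by norm_num) le_rfl)
    have hb1 : (1:ℝ)/4 ≤ ∫ t in (0:ℝ)..(1/4:ℝ), H t := by
      have := intervalIntegral.integral_mono_on (by norm_num : (0:ℝ) ≤ 1/4)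
        (intervalIntegrable_const (c := (1:ℝ)))
        (hint 0 (1/4) le_rfl (by norm_num) (by norm_num))
        (fun x hx => hH1 x (Set.Icc_subset_Icc le_rfl (by norm_num) hx))
      rw [intervalIntegral.integral_const, smul_eq_mul] at this
      linarith
    have hb3 : (1:ℝ)/4 ≤ ∫ t in (3/4:ℝ)..1, H t := by
      have := intervalIntegral.integral_mono_on (by norm_num : (3:ℝ)/4 ≤ 1)
        (intervalIntegrable_const (c := (1:ℝ)))
        (hint (3/4) 1 (by norm_num) (by norm_num) le_rfl)
        (fun x hx => hH1 x (Set.Icc_subset_Icc (by norm_num) le_rfl hx))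
      rw [intervalIntegral.integral_const, smul_eq_mul] at this
      linarith
    have hb2 : (1/2:ℝ) * Real.logb 2 (20/9) ≤ ∫ t in (1/4:ℝ)..(3/4:ℝ), H t := by
      have := intervalIntegral.integral_mono_on (by norm_num : (1:ℝ)/4 ≤ 3/4)
        (intervalIntegrable_const (c := Real.logb 2 (20/9)))
        (hint (1/4) (3/4) (by norm_num) (by norm_num) (by norm_num))
        (fun x hx => hHmid x hx)
      rw [intervalIntegral.integral_const, smul_eq_mul] at this
      linarith
    have hlogb : 1 < Real.logb 2 (20/9) := by
      calc (1:ℝ) = Real.logb 2 2 := (Real.logb_self_eq_one (by norm_num)).symm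
        _ < Real.logb 2 (20/9) := Real.logb_lt_logb (by norm_num) (by norm_num) (by norm_num)
    have hIco : ∫ t in Set.Ico (0:ℝ) 1, H t = ∫ t in (0:ℝ)..1, H t := by
      rw [MeasureTheory.integral_Ico_eq_integral_Ioo,
        intervalIntegral.integral_of_le (by norm_num : (0:ℝ) ≤ 1),
        MeasureTheory.integral_Ioc_eq_integral_Ioo]
    show 1 < ∫ t in Set.Ico (0:ℝ) 1, H t
    rw [hIco, ← hsplit1, ← hsplit2]
    nlinarith [hb1, hb2, hb3, hlogb]
  · -- a.e. derivative zero
    set Gext : ℝ → ℝ := fun x => G (max 0 (min 1 x)) with hGext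
    have hclamp : ∀ x : ℝ, max 0 (min 1 x) ∈ Set.Icc (0:ℝ) 1 := fun x =>
      ⟨le_max_left _ _, max_le (by norm_num) (min_le_left _ _)⟩
    have hmonoext : Monotone Gext := fun x y hxy =>
      hmono (hclamp x) (hclamp y) (max_le_max le_rfl (min_le_min le_rfl hxy))
    filter_upwards [Filter.Eventually.filter_mono (ae_mono Measure.restrict_le_self)
        hmonoext.ae_differentiableAt, ae_restrict_mem measurableSet_Ioo] with x hdiff hx
    have hev : Gext =ᶠ[𝓝 x] G := by
      filter_upwards [isOpen_Ioo.mem_nhds hx] with y hy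
      simp only [hGext]
      rw [min_eq_right hy.2.le, max_eq_right hy.1.le]
    have hda : HasDerivAt G (deriv Gext x) x := hev.hasDerivAt_iff.mp hdiff.hasDerivAt
    have h0 : deriv Gext x = 0 := deriv_eq_zero G hGX hGeq0 hGeq1 hG0 hG1 hx hda
    rw [h0] at hda
    exact hda.hasDerivWithinAt
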